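/- For any field F and n ≥ 2, there exist matrices a, b ∈ Mₙ(F) generating Mₙ(F) as an F-algebra and a subspace W ⊆ Fⁿ with dim W = ⌊n/2⌋ such that dim(W + aW + bW) ≤ dim W + 2. -/

import Mathlib

open Module Matrix

section Aux

variable {F : Type*} [Field F] {n : ℕ}

/-- The down-shift matrix. -/
private def shiftMat (F : Type*) [Field F] (n : ℕ) : Matrix (Fin n) (Fin n) F :=
  Matrix.of fun i j => if (i : ℕ) = (j : ℕ) + 1 then 1 else 0

private lemma shift_mul_std (i j : Fin n) (h : (i : ℕ) + 1 < n) :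
    shiftMat F n * Matrix.single i j (1 : F) =
      Matrix.single (⟨(i : ℕ) + 1, h⟩ : Fin n) j (1 : F) := by
  ext k l
  rw [Matrix.mul_apply]
  simp only [Matrix.single, Matrix.of_apply, shiftMat, mul_ite, mul_one, mul_zero]
  rw [Finset.sum_eq_single i]
  · try simp only [ne_eq, Fin.ext_iff, Fin.val_mk]
    split_ifs <;> first | (norm_num; done) | (exfalso; simp only [ne_eq, true_and, and_true, Fin.ext_iff, Fin.val_mk] at *; omega)
  · intro m _ hm
    try simp only [ne_eq, Fin.ext_iff] at hm ⊢
    split_ifs <;> first | rfl | (norm_num; done) | (exfalso; (try simp only [ne_eq, true_and, and_true, Fin.ext_iff, Fin.val_mk] at *); omega)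
  · simp

private lemma std_mul_shiftT (i j : Fin n) (h : (j : ℕ) + 1 < n) :
    Matrix.single i j (1 : F) * (shiftMat F n)ᵀ =
      Matrix.single i (⟨(j : ℕ) + 1, h⟩ : Fin n) (1 : F) := by
  ext k l
  rw [Matrix.mul_apply]
  simp only [Matrix.single, Matrix.of_apply, Matrix.transpose_apply, shiftMat,
    mul_ite, mul_one, mul_zero, ite_mul, zero_mul, one_mul]
  rw [Finset.sum_eq_single j]
  · try simp only [ne_eq, Fin.ext_iff, Fin.val_mk]
    split_ifs <;> first | (norm_num; done) | (exfalso; (try simp only [ne_eq, true_and, and_true, Fin.ext_iff, Fin.val_mk] at *); omega)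
  · intro m _ hm
    try simp only [ne_eq, Fin.ext_iff] at hm ⊢
    split_ifs <;> first | rfl | (norm_num; done) | (exfalso; (try simp only [ne_eq, true_and, and_true, Fin.ext_iff, Fin.val_mk] at *); omega)
  · simp

private lemma std_zero_eq (h0 : 0 < n) :
    Matrix.single (⟨0, h0⟩ : Fin n) (⟨0, h0⟩ : Fin n) (1 : F) =
      1 - shiftMat F n * (shiftMat F n)ᵀ := by
  ext k l
  rw [Matrix.sub_apply, Matrix.mul_apply]
  simp only [Matrix.single, Matrix.of_apply, Matrix.transpose_apply, shiftMat,
    Matrix.one_apply, mul_ite, mul_one, mul_zero, ite_mul, zero_mul, one_mul]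
  rcases Nat.eq_zero_or_pos (k : ℕ) with hk | hk
  · rw [Finset.sum_eq_zero]
    · try simp only [ne_eq, Fin.ext_iff, Fin.val_mk]
      split_ifs <;> first | (norm_num; done) | (exfalso; (try simp only [ne_eq, true_and, and_true, Fin.ext_iff, Fin.val_mk] at *); omega)
    · intro m _
      try simp only [ne_eq, Fin.ext_iff, Fin.val_mk]
      split_ifs <;> first | rfl | (norm_num; done) | (exfalso; (try simp only [ne_eq, true_and, and_true, Fin.ext_iff, Fin.val_mk] at *); omega)
  · have hkn : (k : ℕ) - 1 < n := by omega
    rw [Finset.sum_eq_single (⟨(k : ℕ) - 1, hkn⟩ : Fin n)]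
    · try simp only [ne_eq, Fin.ext_iff, Fin.val_mk]
      split_ifs <;> first | (norm_num; done) | (exfalso; (try simp only [ne_eq, true_and, and_true, Fin.ext_iff, Fin.val_mk] at *); omega)
    · intro m _ hm
      try simp only [ne_eq, Fin.ext_iff, Fin.val_mk] at hm ⊢
      split_ifs <;> first | rfl | (norm_num; done) | (exfalso; (try simp only [ne_eq, true_and, and_true, Fin.ext_iff, Fin.val_mk] at *); omega)
    · simp

private lemma std_mem (hn : 0 < n) (i j : Fin n) :
    Matrix.single i j (1 : F) ∈
      Algebra.adjoin F ({shiftMat F n, (shiftMat F n)ᵀ} :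
        Set (Matrix (Fin n) (Fin n) F)) := by
  set S := Algebra.adjoin F ({shiftMat F n, (shiftMat F n)ᵀ} :
    Set (Matrix (Fin n) (Fin n) F)) with hS
  have ha : shiftMat F n ∈ S := Algebra.subset_adjoin (by simp)
  have hb : (shiftMat F n)ᵀ ∈ S := Algebra.subset_adjoin (by simp)
  have hcol : ∀ (i : ℕ) (h : i < n),
      Matrix.single (⟨i, h⟩ : Fin n) (⟨0, hn⟩ : Fin n) (1 : F) ∈ S := by
    intro i
    induction i with
    | zero =>
      intro h
      rw [std_zero_eq hn]
      exact Subalgebra.sub_mem S (Subalgebra.one_mem S) (Subalgebra.mul_mem S ha hb)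
    | succ m ih =>
      intro h
      have hm : m < n := by omega
      rw [← shift_mul_std (⟨m, hm⟩ : Fin n) (⟨0, hn⟩ : Fin n) h]
      exact Subalgebra.mul_mem S ha (ih hm)
  have hall : ∀ (j : ℕ) (hj : j < n) (i : Fin n),
      Matrix.single i (⟨j, hj⟩ : Fin n) (1 : F) ∈ S := by
    intro j
    induction j with
    | zero =>
      intro hj i
      exact hcol (i : ℕ) i.isLt
    | succ m ih =>
      intro hj i
      have hm : m < n := by omega
      rw [← std_mul_shiftT i (⟨m, hm⟩ : Fin n) hj]
      exact Subalgebra.mul_mem S (ih hm i) hb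
  exact hall (j : ℕ) j.isLt i

private lemma adjoin_shifts_eq_top (hn : 0 < n) :
    Algebra.adjoin F ({shiftMat F n, (shiftMat F n)ᵀ} :
      Set (Matrix (Fin n) (Fin n) F)) = ⊤ := by
  rw [eq_top_iff]
  intro M _
  rw [Matrix.matrix_eq_sum_single M]
  apply Subalgebra.sum_mem
  intro i _
  apply Subalgebra.sum_mem
  intro j _
  have : Matrix.single i j (M i j) =
      M i j • Matrix.single i j (1 : F) := by
    rw [Matrix.smul_single, smul_eq_mul, mul_one]
  rw [this]
  exact Subalgebra.smul_mem _ (std_mem hn i j) _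

private lemma shift_mulVec_single (j : Fin n) (h : (j : ℕ) + 1 < n) :
    (shiftMat F n).mulVec (Pi.single j (1 : F)) =
      Pi.single (⟨(j : ℕ) + 1, h⟩ : Fin n) (1 : F) := by
  funext i
  rw [Matrix.mulVec_single_one, Matrix.col_apply]
  simp only [shiftMat, Matrix.of_apply, mul_one, Pi.single_apply, ne_eq, Fin.ext_iff, Fin.val_mk]
  all_goals split_ifs <;> first | rfl | (exfalso; omega)

private lemma shiftT_mulVec_single_zero (j : Fin n) (h : (j : ℕ) = 0) :
    ((shiftMat F n)ᵀ).mulVec (Pi.single j (1 : F)) = 0 := by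
  funext i
  rw [Matrix.mulVec_single_one, Matrix.col_apply]
  simp only [shiftMat, Matrix.transpose_apply, Matrix.of_apply, mul_one, Pi.zero_apply]
  all_goals split_ifs <;> first | rfl | (exfalso; omega)

private lemma shiftT_mulVec_single (j : Fin n) (h : 0 < (j : ℕ)) (h2 : (j : ℕ) - 1 < n) :
    ((shiftMat F n)ᵀ).mulVec (Pi.single j (1 : F)) =
      Pi.single (⟨(j : ℕ) - 1, h2⟩ : Fin n) (1 : F) := by
  funext i
  rw [Matrix.mulVec_single_one, Matrix.col_apply]
  simp only [shiftMat, Matrix.transpose_apply, Matrix.of_apply, mul_one, Pi.single_apply,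
    ne_eq, Fin.ext_iff, Fin.val_mk]
  all_goals split_ifs <;> first | rfl | (exfalso; omega)

/-- Span of the first `m` standard basis vectors of `Fⁿ`. -/
private def firstSpan (F : Type*) [Field F] (n m : ℕ) (h : m ≤ n) :
    Submodule F (Fin n → F) :=
  Submodule.span F (Set.range fun i : Fin m => Pi.single (Fin.castLE h i) (1 : F))

private lemma firstSpan_rank (m : ℕ) (h : m ≤ n) :
    finrank F (firstSpan F n m h) = m := by
  have he : (fun i : Fin m => (Pi.single (Fin.castLE h i) (1 : F) : Fin n → F)) =
      ⇑(Pi.basisFun F (Fin n)) ∘ Fin.castLE h := by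
    funext i
    simp [Pi.basisFun_apply]
  rw [firstSpan, he, finrank_span_eq_card, Fintype.card_fin]
  exact (Pi.basisFun F (Fin n)).linearIndependent.comp _ (Fin.castLE_injective h)

private lemma single_mem_firstSpan (m : ℕ) (h : m ≤ n) (i : Fin n) (hi : (i : ℕ) < m) :
    Pi.single i (1 : F) ∈ firstSpan F n m h := by
  apply Submodule.subset_span
  exact ⟨⟨(i : ℕ), hi⟩, by congr 1⟩

end Aux

/-- For any field `F` and `n ≥ 2` there are matrices `a, b` generating `Mₙ(F)` as an
`F`-algebra and a subspace `W ⊆ Fⁿ` with `dim W = ⌊n/2⌋` and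
`dim(W + aW + bW) ≤ dim W + 2`. -/
theorem generating_pair_with_small_expansion
    (F : Type*) [Field F] (n : ℕ) (hn : 2 ≤ n) :
    ∃ (a b : Matrix (Fin n) (Fin n) F),
      Algebra.adjoin F ({a, b} : Set (Matrix (Fin n) (Fin n) F)) = ⊤ ∧
      ∃ W : Submodule F (Fin n → F),
        finrank F W = n / 2 ∧
        finrank F ↥(W ⊔ W.map a.mulVecLin ⊔ W.map b.mulVecLin) ≤ finrank F W + 2 := by
  have hn0 : 0 < n := by omega
  refine ⟨shiftMat F n, (shiftMat F n)ᵀ, adjoin_shifts_eq_top hn0, ?_⟩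
  have hk : n / 2 ≤ n := Nat.div_le_self n 2
  have hk1 : n / 2 + 1 ≤ n := by omega
  refine ⟨firstSpan F n (n / 2) hk, firstSpan_rank _ hk, ?_⟩
  have hle : firstSpan F n (n / 2) hk
      ⊔ (firstSpan F n (n / 2) hk).map (shiftMat F n).mulVecLin
      ⊔ (firstSpan F n (n / 2) hk).map ((shiftMat F n)ᵀ).mulVecLin
      ≤ firstSpan F n (n / 2 + 1) hk1 := by
    refine sup_le (sup_le ?_ ?_) ?_
    · rw [firstSpan, Submodule.span_le]
      rintro x ⟨i, rfl⟩
      have hi : ((Fin.castLE hk i : Fin n) : ℕ) < n / 2 + 1 := by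
        have := i.isLt
        simp only [Fin.coe_castLE]
        omega
      exact single_mem_firstSpan _ hk1 _ hi
    · rw [firstSpan, Submodule.map_span, Submodule.span_le]
      rintro x ⟨y, ⟨i, rfl⟩, rfl⟩
      have hi1 : ((Fin.castLE hk i : Fin n) : ℕ) + 1 < n := by
        have := i.isLt
        simp only [Fin.coe_castLE]
        omega
      rw [Matrix.mulVecLin_apply, shift_mulVec_single _ hi1]
      have hi2 : (((⟨((Fin.castLE hk i : Fin n) : ℕ) + 1, hi1⟩ : Fin n)) : ℕ) < n / 2 + 1 := by
        have := i.isLt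
        simp only [Fin.val_mk, Fin.coe_castLE]
        omega
      exact single_mem_firstSpan _ hk1 _ hi2
    · rw [firstSpan, Submodule.map_span, Submodule.span_le]
      rintro x ⟨y, ⟨i, rfl⟩, rfl⟩
      rcases Nat.eq_zero_or_pos ((Fin.castLE hk i : Fin n) : ℕ) with h0 | h0
      · rw [Matrix.mulVecLin_apply, shiftT_mulVec_single_zero _ h0]
        exact Submodule.zero_mem _
      · have h2 : ((Fin.castLE hk i : Fin n) : ℕ) - 1 < n := by omega
        rw [Matrix.mulVecLin_apply, shiftT_mulVec_single _ h0 h2]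
        apply single_mem_firstSpan
        have := i.isLt
        simp only [Fin.coe_castLE] at *
        omega
  calc finrank F ↥(firstSpan F n (n / 2) hk
        ⊔ (firstSpan F n (n / 2) hk).map (shiftMat F n).mulVecLin
        ⊔ (firstSpan F n (n / 2) hk).map ((shiftMat F n)ᵀ).mulVecLin)
      ≤ finrank F (firstSpan F n (n / 2 + 1) hk1) := Submodule.finrank_mono hle
    _ = n / 2 + 1 := firstSpan_rank _ hk1
    _ ≤ finrank F (firstSpan F n (n / 2) hk) + 2 := by rw [firstSpan_rank]; omega
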